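/- Let G be a finite abstract simplicial complex with connection matrix L (an integer square matrix indexed by the elements of G). Then det(L) = φ(G), the Fermi characteristic of G; equivalently, det(L) = (-1)^f where f is the number of simplices of G of even cardinality (odd dimension). In particular det(L) ∈ {1, -1}, so L is unimodular. -/

import Mathlib

open Finset BigOperators

variable {α : Type*} [DecidableEq α]

/-- A finite abstract simplicial complex: a finite collection of nonempty finite
sets closed under taking nonempty subsets. -/
def IsComplex (G : Finset (Finset α)) : Prop :=
  (∀ x ∈ G, x.Nonempty) ∧ ∀ x ∈ G, ∀ y : Finset α, y.Nonempty → y ⊆ x → y ∈ G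

/-- ω(x) = (-1)^(|x|-1). -/
def omegaS (x : Finset α) : ℤ := (-1) ^ (x.card - 1)

/-- The connection matrix over ℤ: L(x,y)=1 if x and y intersect, 0 otherwise. -/
def connL (G : Finset (Finset α)) : Matrix G G ℤ :=
  fun x y => if (x.1 ∩ y.1).Nonempty then 1 else 0

/-- Key combinatorial lemma: the sum of ω over the nonempty subsets of `s` is
1 if `s` is nonempty and 0 otherwise. -/
lemma sum_omega_powerset (s : Finset α) :
    ∑ z ∈ s.powerset.filter (fun z => z.Nonempty), omegaS z
      = if s.Nonempty then 1 else 0 := by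
  classical
  have key : (∑ m ∈ s.powerset, (-1 : ℤ) ^ m.card) = if s = ∅ then 1 else 0 :=
    Finset.sum_powerset_neg_one_pow_card
  have hsplit : (∑ m ∈ s.powerset, (-1 : ℤ) ^ m.card)
      = 1 + ∑ z ∈ s.powerset.filter (fun z => z.Nonempty), (-1 : ℤ) ^ z.card := by
    rw [← Finset.sum_filter_add_sum_filter_not s.powerset (fun z => z.Nonempty)]
    have h1 : s.powerset.filter (fun z => ¬ z.Nonempty) = {∅} := by
      ext z
      simp [Finset.not_nonempty_iff_eq_empty]
      rintro rfl; exact Finset.empty_subset _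
    rw [h1]
    simp [add_comm]
  have homega : ∀ z ∈ s.powerset.filter (fun z => z.Nonempty),
      omegaS z = -((-1 : ℤ) ^ z.card) := by
    intro z hz
    have hz' : z.Nonempty := (Finset.mem_filter.mp hz).2
    have hc : 1 ≤ z.card := Finset.card_pos.mpr hz'
    have e : z.card - 1 + 1 = z.card := by omega
    calc omegaS z = (-1 : ℤ) ^ (z.card - 1) := rfl
      _ = -((-1 : ℤ) ^ (z.card - 1) * (-1)) := by ring
      _ = -((-1 : ℤ) ^ (z.card - 1 + 1)) := by rw [pow_succ]
      _ = -((-1 : ℤ) ^ z.card) := by rw [e]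
  rw [Finset.sum_congr rfl homega, Finset.sum_neg_distrib]
  have : ∑ z ∈ s.powerset.filter (fun z => z.Nonempty), (-1 : ℤ) ^ z.card
      = (if s = ∅ then 1 else 0) - 1 := by
    rw [← key, hsplit]; ring
  rw [this]
  rcases s.eq_empty_or_nonempty with rfl | hs
  · simp
  · simp [Finset.nonempty_iff_ne_empty.mp hs, hs]

lemma prod_omega_eq (G : Finset (Finset α)) (h : ∀ x ∈ G, x.Nonempty) :
    ∏ x ∈ G, omegaS x = (-1) ^ (G.filter (fun x => x.card % 2 = 0)).card := by
  classical
  have : ∏ x ∈ G, omegaS x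
      = ∏ x ∈ G, (if x.card % 2 = 0 then (-1 : ℤ) else 1) := by
    apply Finset.prod_congr rfl
    intro x hx
    have hc : 1 ≤ x.card := Finset.card_pos.mpr (h x hx)
    unfold omegaS
    rcases Nat.mod_two_eq_zero_or_one x.card with h2 | h2
    · have hodd : Odd (x.card - 1) := by rw [Nat.odd_iff]; omega
      simp [h2, hodd.neg_one_pow]
    · have heven : Even (x.card - 1) := by rw [Nat.even_iff]; omega
      simp [h2, heven.neg_one_pow]
  rw [this, Finset.prod_ite, Finset.prod_const, Finset.prod_const]
  simp

theorem unimodularity (G : Finset (Finset α)) (hG : IsComplex G) :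
    (connL G).det = ∏ x ∈ G, omegaS x ∧
    (connL G).det = (-1) ^ (G.filter (fun x => x.card % 2 = 0)).card := by
  classical
  obtain ⟨hne, hcl⟩ := hG
  set B : Matrix G G ℤ := fun z x => if z.1 ⊆ x.1 then 1 else 0 with hB
  set D : Matrix G G ℤ := Matrix.diagonal (fun z => omegaS z.1) with hD
  -- L = Bᵀ * D * B
  have hLB : connL G = B.transpose * (D * B) := by
    ext x y
    have hDB : ∀ z : G, (D * B) z y = omegaS z.1 * B z y := by
      intro z; rw [hD, Matrix.diagonal_mul]
    rw [Matrix.mul_apply]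
    simp only [Matrix.transpose_apply, hDB]
    have : ∀ z : G, B z x * (omegaS z.1 * B z y)
        = if z.1 ⊆ x.1 ∩ y.1 then omegaS z.1 else 0 := by
      intro z
      rw [hB]
      by_cases h1 : z.1 ⊆ x.1 <;> by_cases h2 : z.1 ⊆ y.1 <;>
        simp [h1, h2, Finset.subset_inter_iff]
    rw [Finset.sum_congr rfl (fun z _ => this z)]
    have hsum : ∑ z : G, (if z.1 ⊆ x.1 ∩ y.1 then omegaS z.1 else 0)
        = ∑ z ∈ G.filter (fun z => z ⊆ x.1 ∩ y.1), omegaS z := by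
      rw [Finset.sum_filter, ← Finset.sum_coe_sort G (fun z => if z ⊆ x.1 ∩ y.1 then omegaS z else 0)]
    rw [hsum]
    have hset : G.filter (fun z => z ⊆ x.1 ∩ y.1)
        = (x.1 ∩ y.1).powerset.filter (fun z => z.Nonempty) := by
      ext z
      simp only [Finset.mem_filter, Finset.mem_powerset]
      constructor
      · rintro ⟨hzG, hzs⟩; exact ⟨hzs, hne z hzG⟩
      · rintro ⟨hzs, hzne⟩
        refine ⟨hcl x.1 x.2 z hzne ?_, hzs⟩
        exact hzs.trans Finset.inter_subset_left
    rw [hset, sum_omega_powerset]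
    rfl
  -- det B = 1
  have hBdet : B.det = 1 := by
    have hBT : B.BlockTriangular (fun z : G => z.1.card) := by
      intro z x hlt
      rw [hB]
      simp only
      rw [if_neg]
      intro hsub
      exact absurd (Finset.card_le_card hsub) (not_le.mpr hlt)
    rw [hBT.det]
    apply Finset.prod_eq_one
    intro a _
    have : B.toSquareBlock (fun z : G => z.1.card) a = 1 := by
      ext i j
      rw [Matrix.toSquareBlock_def]
      simp only [Matrix.toSquareBlock_def, hB, Matrix.of_apply, Matrix.one_apply]
      by_cases hij : i = j
      · simp [hij]
      · rw [if_neg, if_neg hij]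
        intro hsub
        have hcard : (i.1 : Finset α).card = (j.1 : Finset α).card := by
          rw [i.2, j.2]
        have : (i.1 : Finset α) = j.1 := Finset.eq_of_subset_of_card_le hsub (le_of_eq hcard.symm)
        exact hij (Subtype.ext (Subtype.ext this))
    rw [this, Matrix.det_one]
  have hDdet : D.det = ∏ x ∈ G, omegaS x := by
    rw [hD, Matrix.det_diagonal]
    exact Finset.prod_coe_sort G omegaS
  have hmain : (connL G).det = ∏ x ∈ G, omegaS x := by
    rw [hLB, Matrix.det_mul, Matrix.det_mul, Matrix.det_transpose, hBdet, hDdet]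
    ring
  exact ⟨hmain, hmain.trans (prod_omega_eq G hne)⟩
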